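/- In a proper unital *-ring A with A_Σ salient: if a ∈ 𝔠, c ∈ A with a ⪯ c, and b ∈ A with cb = 0, then ab = 0. -/

import Mathlib

open Pointwise

/-- Finite sums of elements of the form `star a * a`. -/
def sSums (A : Type*) [Ring A] [StarRing A] : Set A :=
  (AddSubmonoid.closure {x : A | ∃ a : A, x = star a * a} : Set A)

/-- The *-positive elements. -/
def pos (A : Type*) [Ring A] [StarRing A] : Set A :=
  {a : A | ∃ n : ℕ, 0 < n ∧ n • a ∈ sSums A}

/-- The *-accretive elements. -/
def accr (A : Type*) [Ring A] [StarRing A] : Set A :=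
  {a : A | a + star a ∈ pos A}

/-- The order `a ⪯ b ⟺ b - a ∈ 𝔯`. -/
def ple {A : Type*} [Ring A] [StarRing A] (a b : A) : Prop := b - a ∈ accr A

/-- The cone `𝔠`. -/
def cone (A : Type*) [Ring A] [StarRing A] : Set A :=
  {a : A | ∃ n : ℕ, 0 < n ∧ ple (star a * a) (n • a)}

/-- The ball `𝔅`. -/
def ball (A : Type*) [Ring A] [StarRing A] : Set A :=
  {a : A | ple (star a * a) 1}

section Aux
variable {A : Type*} [Ring A] [StarRing A]

lemma sSums_self (a : A) : star a * a ∈ sSums A :=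
  AddSubmonoid.subset_closure ⟨a, rfl⟩

lemma sSums_nsmul {x : A} (hx : x ∈ sSums A) (n : ℕ) : n • x ∈ sSums A :=
  AddSubmonoid.nsmul_mem _ hx n

lemma sSums_conj {x : A} (hx : x ∈ sSums A) (b : A) : star b * x * b ∈ sSums A := by
  induction hx using AddSubmonoid.closure_induction with
  | mem x h =>
    obtain ⟨a, rfl⟩ := h
    have : star b * (star a * a) * b = star (a * b) * (a * b) := by
      simp [star_mul, mul_assoc]
    rw [this]; exact sSums_self _
  | zero => rw [mul_zero, zero_mul]; exact AddSubmonoid.zero_mem _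
  | add x y hx hy px py =>
    have : star b * (x + y) * b = star b * x * b + star b * y * b := by
      rw [mul_add, add_mul]
    rw [this]; exact AddSubmonoid.add_mem _ px py

lemma pos_add {x y : A} (hx : x ∈ pos A) (hy : y ∈ pos A) : x + y ∈ pos A := by
  obtain ⟨n, hn, hnx⟩ := hx
  obtain ⟨m, hm, hmy⟩ := hy
  refine ⟨n * m, Nat.mul_pos hn hm, ?_⟩
  have : (n * m) • (x + y) = m • (n • x) + n • (m • y) := by
    rw [smul_add, smul_smul, smul_smul, Nat.mul_comm m n]
  rw [this]
  exact AddSubmonoid.add_mem _ (sSums_nsmul hnx m) (sSums_nsmul hmy n)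

lemma pos_nsmul {x : A} (hx : x ∈ pos A) (k : ℕ) : k • x ∈ pos A := by
  obtain ⟨n, hn, hnx⟩ := hx
  exact ⟨n, hn, by rw [smul_comm]; exact sSums_nsmul hnx k⟩

lemma pos_conj {x : A} (hx : x ∈ pos A) (b : A) : star b * x * b ∈ pos A := by
  obtain ⟨n, hn, hnx⟩ := hx
  refine ⟨n, hn, ?_⟩
  have : n • (star b * x * b) = star b * (n • x) * b := by
    rw [mul_smul_comm, smul_mul_assoc]
  rw [this]; exact sSums_conj hnx b

lemma accr_conj {z : A} (hz : z ∈ accr A) (b : A) : star b * z * b ∈ accr A := by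
  have : star b * z * b + star (star b * z * b) = star b * (z + star z) * b := by
    simp [star_mul, mul_add, add_mul, mul_assoc]
  unfold accr
  rw [Set.mem_setOf_eq, this]
  exact pos_conj hz b

lemma accr_add {x y : A} (hx : x ∈ accr A) (hy : y ∈ accr A) : x + y ∈ accr A := by
  have : (x + y) + star (x + y) = (x + star x) + (y + star y) := by
    rw [star_add]; abel
  unfold accr
  rw [Set.mem_setOf_eq, this]
  exact pos_add hx hy

lemma accr_nsmul {z : A} (hz : z ∈ accr A) (k : ℕ) : k • z ∈ accr A := by
  have : k • z + star (k • z) = k • (z + star z) := by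
    rw [star_nsmul, smul_add]
  unfold accr
  rw [Set.mem_setOf_eq, this]
  exact pos_nsmul hz k

lemma ple_trans {x y z : A} (h1 : ple x y) (h2 : ple y z) : ple x z := by
  have : z - x = (z - y) + (y - x) := by abel
  unfold ple; rw [this]; exact accr_add h2 h1

end Aux

theorem stmt10 {A : Type*} [Ring A] [StarRing A]
    (proper : ∀ a : A, star a * a = 0 → a = 0)
    (salient : sSums A ∩ (-sSums A) = {0})
    (a b c : A) (ha : a ∈ cone A) (hac : ple a c) (hcb : c * b = 0) :
    a * b = 0 := by
  obtain ⟨n, hn, hna⟩ := ha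
  set x : A := star (a * b) * (a * b) with hxdef
  -- step 1: x ⪯ n • (star b * a * b)
  have h1 : ple x (n • (star b * a * b)) := by
    have := accr_conj hna b
    have e : star b * (n • a - star a * a) * b
        = n • (star b * a * b) - x := by
      simp only [hxdef, star_mul]
      simp only [mul_sub, sub_mul, mul_smul_comm, smul_mul_assoc, mul_assoc]
    unfold ple
    rwa [← e]
  -- step 2: star b * a * b ⪯ 0
  have h2 : ple (star b * a * b) 0 := by
    have := accr_conj hac b
    have e : star b * (c - a) * b = 0 - star b * a * b := by
      rw [mul_sub, sub_mul, mul_assoc, hcb, mul_zero]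
    unfold ple
    rwa [← e]
  have h3 : ple (n • (star b * a * b)) 0 := by
    have := accr_nsmul h2 n
    unfold ple at this ⊢
    simpa using this
  have h4 : ple x 0 := ple_trans h1 h3
  -- x is self-adjoint and in sSums
  have hxs : x ∈ sSums A := sSums_self _
  have hxsa : star x = x := by simp [hxdef, star_mul, mul_assoc]
  -- from h4 : -x + star (-x) ∈ pos, i.e. 2 • (-x) ∈ pos
  have h5 : (2 : ℕ) • (-x) ∈ pos A := by
    unfold ple at h4
    have : (0 - x) + star (0 - x) = (2:ℕ) • (-x) := by
      rw [star_sub, star_zero, hxsa, two_smul]; abel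
    have h4' := h4
    unfold accr at h4'
    rwa [Set.mem_setOf_eq, this] at h4'
  obtain ⟨k, hk, hks⟩ := h5
  -- N • x ∈ sSums and -(N • x) ∈ sSums where N = 2*k
  set N : ℕ := k * 2 with hN
  have hNpos : 0 < N := Nat.mul_pos hk (by norm_num)
  have hneg : -(N • x) ∈ sSums A := by
    have : k • ((2:ℕ) • (-x)) = -(N • x) := by
      rw [smul_smul, hN, smul_neg]
    rwa [this] at hks
  have hpos' : N • x ∈ sSums A := sSums_nsmul hxs N
  have hx0 : N • x = 0 := by
    have : N • x ∈ sSums A ∩ (-sSums A) := ⟨hpos', Set.mem_neg.mpr (by simpa using hneg)⟩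
    rw [salient] at this
    exact this
  -- now -x = (N-1) • x ∈ sSums, so x ∈ sSums ∩ -sSums = {0}
  have hnegx : -x ∈ sSums A := by
    have e : ((N : ℕ) - 1) • x = -x := by
      have : ((N - 1) + 1) • x = N • x := by
        congr 1
        omega
      rw [add_smul, one_smul] at this
      rw [hx0] at this
      linear_combination (norm := abel) this
    rw [← e]
    exact sSums_nsmul hxs _
  have hx00 : x = 0 := by
    have : x ∈ sSums A ∩ (-sSums A) := ⟨hxs, Set.mem_neg.mpr (by simpa using hnegx)⟩
    rw [salient] at this
    exact this
  exact proper _ hx00
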